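/- Let C be a circuit with C_r(ι) ∩ C_r(ι') = ∅ for some inputs ι, ι' ∈ BM^m and some r ∈ N. Then C has an r-round execution in which an output register becomes metastable: there exist an input ι'' ∈ BM^m, a state s ∈ S^C_r(ι'' ∘ x_0), and an output register index j such that Out(s)_j = M. -/

import Mathlib

set_option linter.unusedVariables false

attribute [local instance] Classical.propDecidable

/-- Signal values: stable `zero`, `one`, and metastable `meta`. -/
inductive BM : Type
  | zero
  | one
  | metastable
  deriving DecidableEq

/-- Embedding of stable Boolean values into `BM`. -/
def BM.ofBool : Bool → BM
  | false => BM.zero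
  | true => BM.one

/-- `inResM x y` means `y ∈ ResM(x)`, the set of partial resolutions of `x`. -/
def inResM {k : ℕ} (x y : Fin k → BM) : Prop :=
  ∀ i, x i = y i ∨ x i = BM.metastable

/-- `inRes x y` means `y ∈ Res(x)`, i.e. `y` is a complete (stable) resolution of `x`. -/
def inRes {k : ℕ} (x y : Fin k → BM) : Prop :=
  inResM x y ∧ ∀ i, y i ≠ BM.metastable

/-- The complete resolutions of `x`, viewed as Boolean words. -/
def boolRes {k : ℕ} (x : Fin k → BM) : Set (Fin k → Bool) :=
  { z | ∀ i, x i = BM.ofBool (z i) ∨ x i = BM.metastable }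

/-- The metastable (Kleene) extension `f_M : BM^k → BM` of a Boolean function
`f : B^k → B`: it outputs a stable value `b` iff all complete resolutions of the
input evaluate to `b` under `f`, and `meta` otherwise. -/
noncomputable def kleene {k : ℕ} (f : (Fin k → Bool) → Bool) (x : Fin k → BM) : BM :=
  if ∀ z ∈ boolRes x, f z = false then BM.zero
  else if ∀ z ∈ boolRes x, f z = true then BM.one
  else BM.metastable

/-- Combinational logic with `m` input nodes: formulas built from inputs,
`BM`-constants (gates of indegree 0), and gates computing the metastable extension
of a Boolean function of their in-neighbors.  (A DAG evaluates exactly like the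
formula obtained by unsharing, so this faithfully captures evaluation of
combinational logic DAGs.) -/
inductive Comb (m : ℕ) : Type
  | input : Fin m → Comb m
  | const : BM → Comb m
  | gate : (j : ℕ) → ((Fin j → Bool) → Bool) → (Fin j → Comb m) → Comb m

/-- Recursive evaluation of combinational logic on input `x ∈ BM^m`. -/
noncomputable def Comb.eval {m : ℕ} (x : Fin m → BM) : Comb m → BM
  | .input i => x i
  | .const b => b
  | .gate _ f cs => kleene f (fun t => (cs t).eval x)

/-- Register types: simple, mask-0, mask-1. -/
inductive RegType : Type
  | simple
  | mask0
  | mask1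
  deriving DecidableEq

/-- `regRead t b (o, b')` holds iff a register of type `t` in state `b` can be read
with read value `o`, moving to state `b'`:  a register in a stable state yields that
state and keeps it; a simple register in state `meta` yields `meta` and stays `meta`;
a mask-`c` register in state `meta` either yields `c` staying in state `meta`, or
yields `meta` changing its state to `1 - c`. -/
def regRead : RegType → BM → BM × BM → Prop
  | _, BM.zero, p => p = (BM.zero, BM.zero)
  | _, BM.one, p => p = (BM.one, BM.one)
  | RegType.simple, BM.metastable, p => p = (BM.metastable, BM.metastable)
  | RegType.mask0, BM.metastable, p => p = (BM.zero, BM.metastable) ∨ p = (BM.metastable, BM.one)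
  | RegType.mask1, BM.metastable, p => p = (BM.one, BM.metastable) ∨ p = (BM.metastable, BM.zero)

/-- A circuit with `m` input, `k` local and `n` output registers: a type for each
register, combinational logic with `m + k` input nodes (one per non-output register)
and `k + n` output nodes (one per non-input register), and an initialization of the
non-input registers. -/
structure Circuit (m k n : ℕ) : Type where
  inType : Fin m → RegType
  locType : Fin k → RegType
  outType : Fin n → RegType
  logic : Fin (k + n) → Comb (m + k)
  init : Fin (k + n) → BM

/-- A state of a circuit: values of input, local, and output registers. -/
structure CState (m k n : ℕ) : Type where
  inp : Fin m → BM
  loc : Fin k → BM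
  out : Fin n → BM

/-- A state as a word in `BM^{m+k+n}`. -/
def CState.toVec {m k n : ℕ} (s : CState m k n) : Fin (m + (k + n)) → BM :=
  Fin.append s.inp (Fin.append s.loc s.out)

/-- Read phase: `o ∈ BM^{m+k}` are possible read values of the non-output registers
in state `s`, and `ι'` the corresponding successor states of the input registers. -/
def ReadRel {m k n : ℕ} (C : Circuit m k n) (s : CState m k n)
    (o : Fin (m + k) → BM) (ι' : Fin m → BM) : Prop :=
  (∀ i : Fin m, regRead (C.inType i) (s.inp i) (o (Fin.castAdd k i), ι' i)) ∧
  (∀ j : Fin k, ∃ st', regRead (C.locType j) (s.loc j) (o (Fin.natAdd m j), st'))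

/-- Evaluation phase: `f^G` applied to the read values. -/
noncomputable def evalLogic {m k n : ℕ} (C : Circuit m k n) (o : Fin (m + k) → BM) :
    Fin (k + n) → BM :=
  fun j => (C.logic j).eval o

/-- `Write^C(s)`: possible values written to the non-input registers. -/
def WriteSet {m k n : ℕ} (C : Circuit m k n) (s : CState m k n) :
    Set (Fin (k + n) → BM) :=
  { w | ∃ o ι', ReadRel C s o ι' ∧ inResM (evalLogic C o) w }

/-- Successor-state relation: read all non-output registers, evaluate the logic,
and write an arbitrary partial resolution of the result to the non-input registers. -/
def Succ {m k n : ℕ} (C : Circuit m k n) (s s' : CState m k n) : Prop :=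
  ∃ o ι', ReadRel C s o ι' ∧ s'.inp = ι' ∧
    inResM (evalLogic C o) (Fin.append s'.loc s'.out)

/-- `reach C r s₀ = S^C_r(s₀)`: states reachable in `r` rounds from `s₀`. -/
def reach {m k n : ℕ} (C : Circuit m k n) : ℕ → CState m k n → Set (CState m k n)
  | 0, s => {s}
  | r + 1, s => { t | ∃ u ∈ reach C r s, Succ C u t }

/-- The initial state of `C` with input `ι`. -/
def initState {m k n : ℕ} (C : Circuit m k n) (ι : Fin m → BM) : CState m k n :=
  ⟨ι, fun j => C.init (Fin.castAdd n j), fun j => C.init (Fin.natAdd k j)⟩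

/-- `C_r(ι)`: possible outputs after `r` rounds on input `ι`. -/
def Cout {m k n : ℕ} (C : Circuit m k n) (r : ℕ) (ι : Fin m → BM) :
    Set (Fin n → BM) :=
  { y | ∃ s ∈ reach C r (initState C ι), y = s.out }

/-- `r` rounds of `C` implement `f` iff `C_r(ι) ⊆ f(ι)` for all inputs `ι`. -/
def Implements {m k n : ℕ} (C : Circuit m k n) (r : ℕ)
    (f : (Fin m → BM) → Set (Fin n → BM)) : Prop :=
  ∀ ι, Cout C r ι ⊆ f ι

/-- All registers of the circuit are simple. -/
def OnlySimple {m k n : ℕ} (C : Circuit m k n) : Prop :=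
  (∀ i, C.inType i = RegType.simple) ∧ (∀ j, C.locType j = RegType.simple) ∧
    (∀ j, C.outType j = RegType.simple)

/-- `Fun_S^r`: functions implementable by `r` rounds of circuits with only simple
registers. -/
def FunS (r m n : ℕ) : Set ((Fin m → BM) → Set (Fin n → BM)) :=
  { f | ∃ k, ∃ C : Circuit m k n, OnlySimple C ∧ Implements C r f }

/-- `Fun_M^r`: functions implementable by `r` rounds of circuits with arbitrary
register types. -/
def FunM (r m n : ℕ) : Set ((Fin m → BM) → Set (Fin n → BM)) :=
  { f | ∃ k, ∃ C : Circuit m k n, Implements C r f }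

/-- A pivotal sequence over `BM^N`: consecutive elements differ in exactly one bit,
and that bit is `meta` in one of the two elements. -/
def PivotalSeq {N ℓ : ℕ} (x : Fin (ℓ + 1) → Fin N → BM) : Prop :=
  ∀ i : Fin ℓ,
    ∃ j : Fin N,
      x i.castSucc j ≠ x i.succ j ∧
      (x i.castSucc j = BM.metastable ∨ x i.succ j = BM.metastable) ∧
      ∀ j' : Fin N, x i.castSucc j' ≠ x i.succ j' → j' = j

/-- A function `f : BM^m → Pow(BM^n)` is natural iff it is bit-wise and closed
(a product of component functions each taking values in `{{0}, {1}, BM}`)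
and specific (stabilizing the input restricts the output). -/
def IsNatural {m n : ℕ} (f : (Fin m → BM) → Set (Fin n → BM)) : Prop :=
  (∃ g : Fin n → (Fin m → BM) → Set BM,
      (∀ i x, g i x = {BM.zero} ∨ g i x = {BM.one} ∨ g i x = (Set.univ : Set BM)) ∧
      (∀ x, f x = { y | ∀ i, y i ∈ g i x })) ∧
  (∀ x y, inRes x y → f y ⊆ f x)

/-- The `i`-th component of the metastable closure of `f : B^m → B^n`. -/
noncomputable def mclosureC {m n : ℕ} (f : (Fin m → Bool) → Fin n → Bool)
    (x : Fin m → BM) (i : Fin n) : Set BM :=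
  if ∀ z ∈ boolRes x, f z i = false then {BM.zero}
  else if ∀ z ∈ boolRes x, f z i = true then {BM.one}
  else Set.univ

/-- The metastable closure `[f]_M : BM^m → Pow(BM^n)` of `f : B^m → B^n`. -/
noncomputable def mclosure {m n : ℕ} (f : (Fin m → Bool) → Fin n → Bool)
    (x : Fin m → BM) : Set (Fin n → BM) :=
  { y | ∀ i, y i ∈ mclosureC f x i }

section AuxMC

variable {m k n : ℕ}

lemma inResM_refl {N : ℕ} (x : Fin N → BM) : inResM x x := fun _ => Or.inl rfl

lemma inResM_trans {N : ℕ} {a b c : Fin N → BM} (h1 : inResM a b) (h2 : inResM b c) :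
    inResM a c := by
  intro i
  rcases h1 i with h | h
  · rw [h]; exact h2 i
  · exact Or.inr h

lemma boolRes_nonempty {N : ℕ} (x : Fin N → BM) : ∃ z, z ∈ boolRes x := by
  refine ⟨fun i => match x i with | BM.one => true | _ => false, fun i => ?_⟩
  rcases h : x i with _ | _ | _ <;> simp [h, BM.ofBool]

lemma kleene_dom {N : ℕ} (f : (Fin N → Bool) → Bool) {x' x : Fin N → BM}
    (h : inResM x' x) :
    kleene f x' = kleene f x ∨ kleene f x' = BM.metastable := by
  have hsub : boolRes x ⊆ boolRes x' := by
    intro z hz i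
    rcases h i with h' | h'
    · rw [h']; exact hz i
    · exact Or.inr h'
  by_cases h0 : ∀ z ∈ boolRes x', f z = false
  · left
    have h0' : ∀ z ∈ boolRes x, f z = false := fun z hz => h0 z (hsub hz)
    unfold kleene
    rw [if_pos h0, if_pos h0']
  · by_cases h1 : ∀ z ∈ boolRes x', f z = true
    · left
      have h1' : ∀ z ∈ boolRes x, f z = true := fun z hz => h1 z (hsub hz)
      have h0' : ¬ ∀ z ∈ boolRes x, f z = false := by
        obtain ⟨z, hz⟩ := boolRes_nonempty x
        intro hall
        have hf := hall z hz
        have ht := h1' z hz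
        simp [hf] at ht
      unfold kleene
      rw [if_neg h0, if_pos h1, if_neg h0', if_pos h1']
    · right
      unfold kleene
      rw [if_neg h0, if_neg h1]

lemma Comb.eval_dom {M : ℕ} (c : Comb M) {x' x : Fin M → BM} (h : inResM x' x) :
    c.eval x' = c.eval x ∨ c.eval x' = BM.metastable := by
  induction c with
  | input i => exact h i
  | const b => exact Or.inl rfl
  | gate j f cs ih =>
      simp only [Comb.eval]
      exact kleene_dom f (fun t => ih t)

lemma evalLogic_dom {C : Circuit m k n} {o' o : Fin (m + k) → BM} (h : inResM o' o) :
    inResM (evalLogic C o') (evalLogic C o) :=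
  fun j => Comb.eval_dom (C.logic j) h

lemma regRead_stable {ty : RegType} {b : BM} {p : BM × BM}
    (hb : b ≠ BM.metastable) (h : regRead ty b p) : p = (b, b) := by
  cases ty <;> cases b <;> simp_all [regRead]

def chooseOpt : RegType → BM → BM × BM
  | RegType.simple, _ => (BM.metastable, BM.metastable)
  | RegType.mask0, BM.zero => (BM.zero, BM.metastable)
  | RegType.mask0, _ => (BM.metastable, BM.one)
  | RegType.mask1, BM.one => (BM.one, BM.metastable)
  | RegType.mask1, _ => (BM.metastable, BM.zero)

lemma chooseOpt_spec (ty : RegType) (b : BM) : regRead ty BM.metastable (chooseOpt ty b) := by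
  cases ty <;> cases b <;> simp [chooseOpt, regRead]

lemma chooseOpt_fst (ty : RegType) (b : BM) (hb : b ≠ BM.metastable) :
    (chooseOpt ty b).1 = b ∨ (chooseOpt ty b).1 = BM.metastable := by
  cases ty <;> cases b <;> simp_all [chooseOpt]

lemma chooseOpt_snd (ty : RegType) (b : BM) (hb : b ≠ BM.metastable) :
    (chooseOpt ty b).2 = b ∨ (chooseOpt ty b).2 = BM.metastable := by
  cases ty <;> cases b <;> simp_all [chooseOpt]

def canonRW (ty : RegType) : BM → BM × BM
  | BM.zero => (BM.zero, BM.zero)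
  | BM.one => (BM.one, BM.one)
  | BM.metastable => chooseOpt ty BM.zero

lemma canonRW_spec (ty : RegType) (b : BM) : regRead ty b (canonRW ty b) := by
  cases b
  · cases ty <;> simp [canonRW, regRead]
  · cases ty <;> simp [canonRW, regRead]
  · exact chooseOpt_spec ty BM.zero

lemma regRead_dom1 {ty : RegType} {b v1 s1 v2 s2 : BM}
    (h1 : regRead ty b (v1, s1)) (h2 : regRead ty b (v2, s2)) :
    v1 = v2 ∨ v1 = BM.metastable ∨ v2 = BM.metastable := by
  cases ty <;> cases b <;> simp_all [regRead] <;> rcases h1 with ⟨rfl, rfl⟩ | ⟨rfl, rfl⟩ <;>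
    rcases h2 with ⟨rfl, rfl⟩ | ⟨rfl, rfl⟩ <;> simp

lemma regRead_dom2 {ty : RegType} {b v1 s1 v2 s2 : BM}
    (h1 : regRead ty b (v1, s1)) (h2 : regRead ty b (v2, s2)) :
    s1 = s2 ∨ s1 = BM.metastable ∨ s2 = BM.metastable := by
  cases ty <;> cases b <;> simp_all [regRead] <;> rcases h1 with ⟨rfl, rfl⟩ | ⟨rfl, rfl⟩ <;>
    rcases h2 with ⟨rfl, rfl⟩ | ⟨rfl, rfl⟩ <;> simp

lemma regRead_inj {ty : RegType} {b v s1 s2 : BM}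
    (h1 : regRead ty b (v, s1)) (h2 : regRead ty b (v, s2)) : s1 = s2 := by
  cases ty <;> cases b <;> simp_all [regRead] <;>
    rcases h1 with ⟨rfl, rfl⟩ | ⟨rfl, rfl⟩ <;>
    rcases h2 with ⟨h2a, rfl⟩ | ⟨h2a, rfl⟩ <;> simp_all

end AuxMC
section AuxMC2

variable {m k n : ℕ}

def CState.get (s : CState m k n) : Fin m ⊕ (Fin k ⊕ Fin n) → BM
  | Sum.inl i => s.inp i
  | Sum.inr (Sum.inl j) => s.loc j
  | Sum.inr (Sum.inr j) => s.out j

lemma cext (s s' : CState m k n) (h : ∀ ρ, s.get ρ = s'.get ρ) : s = s' := by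
  obtain ⟨a, b, c⟩ := s; obtain ⟨a', b', c'⟩ := s'
  simp only [CState.mk.injEq]
  exact ⟨funext fun i => h (Sum.inl i), funext fun j => h (Sum.inr (Sum.inl j)),
    funext fun j => h (Sum.inr (Sum.inr j))⟩

def Adjx (s s' : CState m k n) : Prop :=
  s = s' ∨ ∃ ρ, (∀ ρ', ρ' ≠ ρ → s.get ρ' = s'.get ρ') ∧
    (s.get ρ = BM.metastable ∨ s'.get ρ = BM.metastable ∨ s.get ρ = s'.get ρ)

lemma adjx_symm : Symmetric (@Adjx m k n) := by
  rintro s s' (rfl | ⟨ρ, h1, h2⟩)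
  · exact Or.inl rfl
  · exact Or.inr ⟨ρ, fun ρ' hρ => (h1 ρ' hρ).symm, by tauto⟩

def Pst (C : Circuit m k n) (q : ℕ) (s : CState m k n) : Prop :=
  ∃ ι, s ∈ reach C q (initState C ι)

def StepQ (C : Circuit m k n) (q : ℕ) (s s' : CState m k n) : Prop :=
  Adjx s s' ∧ Pst C q s ∧ Pst C q s'

def Chainx (C : Circuit m k n) (q : ℕ) : CState m k n → CState m k n → Prop :=
  Relation.ReflTransGen (StepQ C q)

lemma stepq_symm {C : Circuit m k n} {q : ℕ} : Symmetric (StepQ C q) :=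
  fun _ _ ⟨h1, h2, h3⟩ => ⟨adjx_symm h1, h3, h2⟩

lemma chainx_symm {C : Circuit m k n} {q : ℕ} {a b : CState m k n}
    (h : Chainx C q a b) : Chainx C q b a :=
  by haveI : Std.Symm (StepQ C q) := ⟨fun a b hab => stepq_symm hab⟩; exact Std.Symm.symm (r := Relation.ReflTransGen (StepQ C q)) _ _ h

lemma pst_succ {C : Circuit m k n} {q : ℕ} {t u : CState m k n}
    (h : Pst C q t) (hs : Succ C t u) : Pst C (q + 1) u := by
  obtain ⟨ι0, h0⟩ := h
  exact ⟨ι0, ⟨t, h0, hs⟩⟩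

def mkS (ι : Fin m → BM) (w : Fin (k + n) → BM) : CState m k n :=
  ⟨ι, fun j => w (Fin.castAdd n j), fun j => w (Fin.natAdd k j)⟩

lemma append_mkS (ι : Fin m → BM) (w : Fin (k + n) → BM) :
    Fin.append (mkS ι w).loc (mkS ι w).out = w := by
  funext c
  refine Fin.addCases (fun j => ?_) (fun j => ?_) c
  · exact Fin.append_left _ _ j
  · exact Fin.append_right _ _ j

lemma state_eq_mkS (u : CState m k n) : u = mkS u.inp (Fin.append u.loc u.out) := by
  refine cext _ _ (fun ρ => ?_)
  match ρ with
  | Sum.inl i => rfl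
  | Sum.inr (Sum.inl j) => exact (Fin.append_left _ _ j).symm
  | Sum.inr (Sum.inr j) => exact (Fin.append_right _ _ j).symm

lemma succ_mkS {C : Circuit m k n} {t : CState m k n} {o : Fin (m + k) → BM}
    {ι : Fin m → BM} {w : Fin (k + n) → BM}
    (hread : ReadRel C t o ι) (hw : inResM (evalLogic C o) w) :
    Succ C t (mkS ι w) :=
  ⟨o, ι, hread, rfl, by rw [append_mkS]; exact hw⟩

def regOf (c : Fin (k + n)) : Fin k ⊕ Fin n := Fin.addCases Sum.inl Sum.inr c

lemma regOf_castAdd (j : Fin k) : regOf (n := n) (Fin.castAdd n j) = Sum.inl j := by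
  simp [regOf]

lemma regOf_natAdd (j : Fin n) : regOf (k := k) (Fin.natAdd k j) = Sum.inr j := by
  simp [regOf]

lemma get_mkS_regOf (ι : Fin m → BM) (w : Fin (k + n) → BM) (c : Fin (k + n)) :
    (mkS ι w).get (Sum.inr (regOf c)) = w c := by
  refine Fin.addCases (fun j => ?_) (fun j => ?_) c
  · rw [regOf_castAdd]; rfl
  · rw [regOf_natAdd]; rfl

lemma adjx_mkS_update (ι : Fin m → BM) (w : Fin (k + n) → BM) (c : Fin (k + n)) (a : BM)
    (ha : w c = BM.metastable ∨ a = BM.metastable ∨ w c = a) :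
    Adjx (mkS ι w) (mkS ι (Function.update w c a)) := by
  right
  refine ⟨Sum.inr (regOf c), fun ρ' hρ' => ?_, ?_⟩
  · match ρ' with
    | Sum.inl i => rfl
    | Sum.inr (Sum.inl j) =>
        have hne : Fin.castAdd n j ≠ c := by
          rintro rfl; exact hρ' (by rw [regOf_castAdd])
        show w (Fin.castAdd n j) = Function.update w c a (Fin.castAdd n j)
        rw [Function.update_of_ne hne]
    | Sum.inr (Sum.inr j) =>
        have hne : Fin.natAdd k j ≠ c := by
          rintro rfl; exact hρ' (by rw [regOf_natAdd])
        show w (Fin.natAdd k j) = Function.update w c a (Fin.natAdd k j)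
        rw [Function.update_of_ne hne]
  · rw [get_mkS_regOf, get_mkS_regOf, Function.update_self]
    exact ha

lemma adjx_mkS_inp (ι : Fin m → BM) (w : Fin (k + n) → BM) (i0 : Fin m) (a : BM)
    (ha : ι i0 = BM.metastable ∨ a = BM.metastable ∨ ι i0 = a) :
    Adjx (mkS ι w) (mkS (Function.update ι i0 a) w) := by
  right
  refine ⟨Sum.inl i0, fun ρ' hρ' => ?_, ?_⟩
  · match ρ' with
    | Sum.inl i =>
        have hne : i ≠ i0 := fun h => hρ' (by rw [h])
        show ι i = Function.update ι i0 a i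
        rw [Function.update_of_ne hne]
    | Sum.inr (Sum.inl j) => rfl
    | Sum.inr (Sum.inr j) => rfl
  · show ι i0 = BM.metastable ∨ Function.update ι i0 a i0 = BM.metastable ∨ ι i0 = Function.update ι i0 a i0
    rw [Function.update_self]
    exact ha

lemma hybChain {N : ℕ} (w e : Fin N → BM) (hM : ∀ c, w c = e c ∨ e c = BM.metastable)
    (Ch : (Fin N → BM) → (Fin N → BM) → Prop)
    (hrefl : ∀ v, Ch v v)
    (htrans : ∀ {a b c}, Ch a b → Ch b c → Ch a c)
    (hstep : ∀ (v : Fin N → BM) (c : Fin N), (∀ c', v c' = w c' ∨ v c' = e c') →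
      Ch v (Function.update v c (e c))) :
    Ch w e := by
  have hmix : ∀ (i : ℕ) (c' : Fin N), (fun c : Fin N => if (c : ℕ) < i then e c else w c) c' = w c' ∨
      (fun c : Fin N => if (c : ℕ) < i then e c else w c) c' = e c' := by
    intro i c'
    by_cases h : (c' : ℕ) < i <;> simp [h]
  have key : ∀ i : ℕ, Ch w (fun c => if (c : ℕ) < i then e c else w c) := by
    intro i
    induction i with
    | zero =>
        have he : (fun c : Fin N => if (c : ℕ) < 0 then e c else w c) = w := by
          funext c; simp
        rw [he]; exact hrefl w
    | succ i ih =>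
        by_cases hi : i < N
        · have hupd : (fun c : Fin N => if (c : ℕ) < i + 1 then e c else w c) =
              Function.update (fun c : Fin N => if (c : ℕ) < i then e c else w c)
                ⟨i, hi⟩ (e ⟨i, hi⟩) := by
            funext c
            by_cases hc : c = ⟨i, hi⟩
            · subst hc; simp
            · rw [Function.update_of_ne hc]
              have hcne : (c : ℕ) ≠ i := fun h => hc (Fin.ext h)
              show (if (c : ℕ) < i + 1 then e c else w c) = if (c : ℕ) < i then e c else w c
              by_cases h2 : (c : ℕ) < i
              · rw [if_pos h2, if_pos (Nat.lt_succ_of_lt h2)]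
              · rw [if_neg h2, if_neg (fun h3 => h2 (lt_of_le_of_ne (Nat.lt_succ_iff.mp h3) hcne))]
          rw [hupd]
          exact htrans ih (hstep _ ⟨i, hi⟩ (hmix i))
        · have heq : (fun c : Fin N => if (c : ℕ) < i + 1 then e c else w c) =
              (fun c : Fin N => if (c : ℕ) < i then e c else w c) := by
            funext c
            have h1 : (c : ℕ) < i := lt_of_lt_of_le c.isLt (not_lt.mp hi)
            rw [if_pos h1, if_pos (Nat.lt_succ_of_lt h1)]
          rw [heq]; exact ih
  have he : (fun c : Fin N => if (c : ℕ) < N then e c else w c) = e := by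
    funext c; rw [if_pos c.isLt]
  have := key N
  rwa [he] at this

end AuxMC2
section AuxMC3

variable {m k n : ℕ}

lemma succ_nonempty (C : Circuit m k n) (t : CState m k n) : ∃ u, Succ C t u := by
  have hread : ReadRel C t
      (Fin.append (fun i => (canonRW (C.inType i) (t.inp i)).1)
        (fun j => (canonRW (C.locType j) (t.loc j)).1))
      (fun i => (canonRW (C.inType i) (t.inp i)).2) := by
    constructor
    · intro i
      have h1 : Fin.append (fun i => (canonRW (C.inType i) (t.inp i)).1)
          (fun j => (canonRW (C.locType j) (t.loc j)).1) (Fin.castAdd k i) =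
          (canonRW (C.inType i) (t.inp i)).1 := Fin.append_left _ _ i
      rw [h1]
      show regRead _ _ ((canonRW (C.inType i) (t.inp i)).1, (canonRW (C.inType i) (t.inp i)).2)
      rw [Prod.mk.eta]
      exact canonRW_spec _ _
    · intro j
      refine ⟨(canonRW (C.locType j) (t.loc j)).2, ?_⟩
      have h1 : Fin.append (fun i => (canonRW (C.inType i) (t.inp i)).1)
          (fun j => (canonRW (C.locType j) (t.loc j)).1) (Fin.natAdd m j) =
          (canonRW (C.locType j) (t.loc j)).1 := Fin.append_right _ _ j
      rw [h1, Prod.mk.eta]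
      exact canonRW_spec _ _
  exact ⟨mkS _ (evalLogic C _), succ_mkS hread (inResM_refl _)⟩

lemma chain_writes {C : Circuit m k n} {q : ℕ} {t : CState m k n}
    {o : Fin (m + k) → BM} {ι : Fin m → BM}
    (hPt : Pst C q t) (hread : ReadRel C t o ι) (w : Fin (k + n) → BM)
    (hw : inResM (evalLogic C o) w) :
    Chainx C (q + 1) (mkS ι w) (mkS ι (evalLogic C o)) := by
  set e := evalLogic C o with he
  have hM : ∀ c, w c = e c ∨ e c = BM.metastable := by
    intro c
    rcases hw c with h | h
    · exact Or.inl h.symm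
    · exact Or.inr h
  refine hybChain w e hM (fun a b => Chainx C (q + 1) (mkS ι a) (mkS ι b))
    (fun _ => Relation.ReflTransGen.refl) (fun h1 h2 => h1.trans h2) ?_
  intro v c hmixv
  have hv : inResM e v := by
    intro c'
    rcases hmixv c' with h | h
    · rw [h]; exact hw c'
    · rw [h]; exact Or.inl rfl
  have hv' : inResM e (Function.update v c (e c)) := by
    intro c'
    by_cases hc : c' = c
    · subst hc; rw [Function.update_self]; exact Or.inl rfl
    · rw [Function.update_of_ne hc]; exact hv c'
  refine Relation.ReflTransGen.single ⟨adjx_mkS_update ι v c (e c) ?_,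
    pst_succ hPt (succ_mkS hread hv), pst_succ hPt (succ_mkS hread hv')⟩
  rcases hmixv c with h | h
  · rcases hM c with h2 | h2
    · exact Or.inr (Or.inr (by rw [h, h2]))
    · exact Or.inr (Or.inl h2)
  · exact Or.inr (Or.inr h)

end AuxMC3
section AuxMC4

variable {m k n : ℕ}

lemma chain_reads {C : Circuit m k n} {q : ℕ} {t : CState m k n}
    {o1 : Fin (m + k) → BM} {ι1 : Fin m → BM} {o2 : Fin (m + k) → BM} {ι2 : Fin m → BM}
    (hPt : Pst C q t) (h1 : ReadRel C t o1 ι1) (h2 : ReadRel C t o2 ι2) :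
    Chainx C (q + 1) (mkS ι1 (evalLogic C o1)) (mkS ι2 (evalLogic C o2)) := by
  set oH : ℕ → Fin (m + k) → BM := fun i c => if (c : ℕ) < i then o2 c else o1 c with hoH
  set ιH : ℕ → Fin m → BM := fun i i' => if ((i' : ℕ)) < i then ι2 i' else ι1 i' with hιH
  have hreadH : ∀ i : ℕ, ReadRel C t (oH i) (ιH i) := by
    intro i
    refine ⟨fun i' => ?_, fun j => ?_⟩
    · show regRead (C.inType i') (t.inp i')
        (if ((Fin.castAdd k i' : Fin (m + k)) : ℕ) < i then o2 (Fin.castAdd k i')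
          else o1 (Fin.castAdd k i'),
         if ((i' : ℕ)) < i then ι2 i' else ι1 i')
      by_cases hlt : (i' : ℕ) < i
      · have hlt2 : ((Fin.castAdd k i' : Fin (m + k)) : ℕ) < i := hlt
        rw [if_pos hlt2, if_pos hlt]
        exact h2.1 i'
      · have hlt2 : ¬ ((Fin.castAdd k i' : Fin (m + k)) : ℕ) < i := hlt
        rw [if_neg hlt2, if_neg hlt]
        exact h1.1 i'
    · show ∃ st', regRead (C.locType j) (t.loc j)
        (if ((Fin.natAdd m j : Fin (m + k)) : ℕ) < i then o2 (Fin.natAdd m j)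
          else o1 (Fin.natAdd m j), st')
      by_cases hlt : ((Fin.natAdd m j : Fin (m + k)) : ℕ) < i
      · rw [if_pos hlt]; exact h2.2 j
      · rw [if_neg hlt]; exact h1.2 j
  have hO0 : oH 0 = o1 := funext fun c => if_neg (Nat.not_lt_zero _)
  have hI0 : ιH 0 = ι1 := funext fun i' => if_neg (Nat.not_lt_zero _)
  have hOtop : oH (m + k) = o2 := funext fun c => if_pos c.isLt
  have hItop : ∀ i : ℕ, m ≤ i → ιH i = ι2 := fun i hi =>
    funext fun i' => if_pos (lt_of_lt_of_le i'.isLt hi)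
  have key : ∀ i : ℕ,
      Chainx C (q + 1) (mkS (ιH 0) (evalLogic C (oH 0))) (mkS (ιH i) (evalLogic C (oH i))) := by
    intro i
    induction i with
    | zero => exact Relation.ReflTransGen.refl
    | succ i ih =>
      refine ih.trans ?_
      by_cases hi : i < m + k
      · set c0 : Fin (m + k) := ⟨i, hi⟩ with hc0
        have hupd : oH (i + 1) = Function.update (oH i) c0 (o2 c0) := by
          funext c
          by_cases hc : c = c0
          · subst hc
            rw [Function.update_self]
            show (if (c0 : ℕ) < i + 1 then o2 c0 else o1 c0) = o2 c0
            rw [if_pos (Nat.lt_succ_self i : (c0 : ℕ) < i + 1)]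
          · rw [Function.update_of_ne hc]
            have hcne : (c : ℕ) ≠ i := fun h => hc (Fin.ext h)
            show (if (c : ℕ) < i + 1 then o2 c else o1 c) = if (c : ℕ) < i then o2 c else o1 c
            by_cases h2 : (c : ℕ) < i
            · rw [if_pos h2, if_pos (by omega : (c : ℕ) < i + 1)]
            · rw [if_neg h2, if_neg (by omega : ¬ (c : ℕ) < i + 1)]
          -- needs hcne in scope for omega: handled below
        have hoi : oH i c0 = o1 c0 := if_neg (Nat.lt_irrefl i : ¬ (c0 : ℕ) < i)
        have hval : o1 c0 = o2 c0 ∨ o1 c0 = BM.metastable ∨ o2 c0 = BM.metastable := by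
          by_cases him : i < m
          · have hcast : Fin.castAdd k (⟨i, him⟩ : Fin m) = c0 := Fin.ext rfl
            have ha := h1.1 ⟨i, him⟩
            have hb := h2.1 ⟨i, him⟩
            rw [hcast] at ha hb
            exact regRead_dom1 ha hb
          · have hj : i - m < k := by omega
            have hcast : Fin.natAdd m (⟨i - m, hj⟩ : Fin k) = c0 :=
              Fin.ext (show m + (i - m) = i by omega)
            obtain ⟨s1, ha⟩ := h1.2 ⟨i - m, hj⟩
            obtain ⟨s2, hb⟩ := h2.2 ⟨i - m, hj⟩
            rw [hcast] at ha hb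
            exact regRead_dom1 ha hb
        -- input-side bridge from mid-inp to new-inp (shared)
        have hstepι : ∀ (w : Fin (k + n) → BM),
            inResM (evalLogic C (oH i)) w → inResM (evalLogic C (oH (i + 1))) w →
            Chainx C (q + 1) (mkS (ιH i) w) (mkS (ιH (i + 1)) w) := by
          intro w hwi hwi1
          by_cases him : i < m
          · have hιupd : ιH (i + 1) = Function.update (ιH i) ⟨i, him⟩ (ι2 ⟨i, him⟩) := by
              funext i'
              by_cases hc : i' = (⟨i, him⟩ : Fin m)
              · subst hc
                rw [Function.update_self]
                show (if (i : ℕ) < i + 1 then ι2 _ else ι1 _) = ι2 _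
                rw [if_pos (Nat.lt_succ_self i)]
              · rw [Function.update_of_ne hc]
                have hcne : (i' : ℕ) ≠ i := fun h => hc (Fin.ext h)
                show (if (i' : ℕ) < i + 1 then ι2 i' else ι1 i') =
                  if (i' : ℕ) < i then ι2 i' else ι1 i'
                by_cases hlt : (i' : ℕ) < i
                · rw [if_pos hlt, if_pos (by omega : (i' : ℕ) < i + 1)]
                · rw [if_neg hlt, if_neg (by omega : ¬ (i' : ℕ) < i + 1)]
            have hιi : ιH i ⟨i, him⟩ = ι1 ⟨i, him⟩ := if_neg (Nat.lt_irrefl i : ¬ ((⟨i, him⟩ : Fin m) : ℕ) < i)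
            have hcast : Fin.castAdd k (⟨i, him⟩ : Fin m) = c0 := Fin.ext rfl
            have ha := h1.1 ⟨i, him⟩
            have hb := h2.1 ⟨i, him⟩
            have hst : ι1 ⟨i, him⟩ = ι2 ⟨i, him⟩ ∨ ι1 ⟨i, him⟩ = BM.metastable ∨
                ι2 ⟨i, him⟩ = BM.metastable := regRead_dom2 ha hb
            rw [hιupd]
            refine Relation.ReflTransGen.single ⟨adjx_mkS_inp _ w ⟨i, him⟩ (ι2 ⟨i, him⟩) ?_,
              pst_succ hPt (succ_mkS (hreadH i) hwi),
              pst_succ hPt (by rw [← hιupd]; exact succ_mkS (hreadH (i + 1)) hwi1)⟩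
            rw [hιi]
            tauto
          · have hιeq : ιH (i + 1) = ιH i := by
              funext i'
              have hlt : (i' : ℕ) < i := by have := i'.isLt; omega
              show (if (i' : ℕ) < i + 1 then ι2 i' else ι1 i') =
                if (i' : ℕ) < i then ι2 i' else ι1 i'
              rw [if_pos hlt, if_pos (by omega : (i' : ℕ) < i + 1)]
            rw [hιeq]
            exact Relation.ReflTransGen.refl
        rcases hval with hveq | hvM | hvM
        · -- equal values: oH (i+1) = oH i, and if input register, states equal too
          have hoeq : oH (i + 1) = oH i := by
            rw [hupd]
            have : o2 c0 = oH i c0 := by rw [hoi, hveq]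
            rw [this, Function.update_eq_self]
          rw [hoeq]
          exact hstepι _ (inResM_refl _) (by rw [hoeq]; exact inResM_refl _)
        · -- o1 c0 = meta : old dominates new
          have hdom : inResM (oH i) (oH (i + 1)) := by
            intro c
            by_cases hc : c = c0
            · subst hc; right; rw [hoi, hvM]
            · left; rw [hupd, Function.update_of_ne hc]
          refine (chainx_symm (chain_writes hPt (hreadH i) (evalLogic C (oH (i + 1)))
            (evalLogic_dom hdom))).trans ?_
          exact hstepι _ (evalLogic_dom hdom) (inResM_refl _)
        · -- o2 c0 = meta : new dominates old
          have hdom : inResM (oH (i + 1)) (oH i) := by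
            intro c
            by_cases hc : c = c0
            · subst hc; right; rw [hupd, Function.update_self, hvM]
            · left; rw [hupd, Function.update_of_ne hc]
          refine (hstepι _ (inResM_refl _) (evalLogic_dom hdom)).trans ?_
          exact chain_writes hPt (hreadH (i + 1)) (evalLogic C (oH i)) (evalLogic_dom hdom)
      · have hoeq : oH (i + 1) = oH i := by
          funext c
          have hlt : (c : ℕ) < i := by have := c.isLt; omega
          show (if (c : ℕ) < i + 1 then o2 c else o1 c) = if (c : ℕ) < i then o2 c else o1 c
          rw [if_pos hlt, if_pos (by omega : (c : ℕ) < i + 1)]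
        have hιeq : ιH (i + 1) = ιH i := by
          funext i'
          have hlt : (i' : ℕ) < i := by have := i'.isLt; omega
          show (if (i' : ℕ) < i + 1 then ι2 i' else ι1 i') =
            if (i' : ℕ) < i then ι2 i' else ι1 i'
          rw [if_pos hlt, if_pos (by omega : (i' : ℕ) < i + 1)]
        rw [hoeq, hιeq]
  have := key (m + k)
  rwa [hO0, hI0, hOtop, hItop (m + k) (Nat.le_add_right m k)] at this

end AuxMC4
section AuxMC5

variable {m k n : ℕ}

lemma chain_same {C : Circuit m k n} {q : ℕ} {t u1 u2 : CState m k n}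
    (hPt : Pst C q t) (h1 : Succ C t u1) (h2 : Succ C t u2) :
    Chainx C (q + 1) u1 u2 := by
  obtain ⟨o1, ι1, hr1, hi1, hw1⟩ := h1
  obtain ⟨o2, ι2, hr2, hi2, hw2⟩ := h2
  have e1 : u1 = mkS ι1 (Fin.append u1.loc u1.out) := by
    rw [← hi1]; exact state_eq_mkS u1
  have e2 : u2 = mkS ι2 (Fin.append u2.loc u2.out) := by
    rw [← hi2]; exact state_eq_mkS u2
  rw [e1, e2]
  exact (chain_writes hPt hr1 _ hw1).trans
    ((chain_reads hPt hr1 hr2).trans (chainx_symm (chain_writes hPt hr2 _ hw2)))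

lemma cross_resp {C : Circuit m k n} {q : ℕ} {t t' : CState m k n}
    (ρ0 : Fin m ⊕ (Fin k ⊕ Fin n))
    (hoff : ∀ ρ', ρ' ≠ ρ0 → t.get ρ' = t'.get ρ')
    (hM : t'.get ρ0 = BM.metastable)
    (hPt : Pst C q t) (hPt' : Pst C q t')
    {u : CState m k n} (hu : Succ C t u) :
    ∃ u', Succ C t' u' ∧ Chainx C (q + 1) u u' := by
  by_cases hbM : t.get ρ0 = BM.metastable
  · -- t = t'
    obtain rfl : t = t' := cext t t' (fun ρ => by
      by_cases hρ : ρ = ρ0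
      · subst hρ; rw [hbM, hM]
      · exact hoff ρ hρ)
    exact ⟨u, hu, Relation.ReflTransGen.refl⟩
  obtain ⟨o, ι', hread, hinp, hw⟩ := hu
  match ρ0 with
  | Sum.inl i0 =>
    have hMi : t'.inp i0 = BM.metastable := hM
    have hbi : t.inp i0 ≠ BM.metastable := hbM
    have hloc : t'.loc = t.loc := funext fun j =>
      (hoff (Sum.inr (Sum.inl j)) (by simp)).symm
    have hinp' : ∀ i', i' ≠ i0 → t'.inp i' = t.inp i' := fun i' hi' =>
      (hoff (Sum.inl i') (by simp [hi'])).symm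
    have hri0 := hread.1 i0
    have hpair := regRead_stable hbi hri0
    have ho0 : o (Fin.castAdd k i0) = t.inp i0 := congrArg Prod.fst hpair
    have hι0 : ι' i0 = t.inp i0 := congrArg Prod.snd hpair
    set p := chooseOpt (C.inType i0) (t.inp i0) with hp
    set c0 := Fin.castAdd (n := m) k i0 with hc0
    set o' := Function.update o c0 p.1 with ho'
    set ι'' := Function.update ι' i0 p.2 with hι''
    have hread' : ReadRel C t' o' ι'' := by
      constructor
      · intro i'
        by_cases hi' : i' = i0
        · subst hi'
          have e1 : o' (Fin.castAdd k i') = p.1 := by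
            rw [ho']; exact Function.update_self _ _ _
          have e2 : ι'' i' = p.2 := by
            rw [hι'']; exact Function.update_self _ _ _
          rw [e1, e2, hMi, Prod.mk.eta]
          exact chooseOpt_spec _ _
        · have hne : Fin.castAdd k i' ≠ c0 := by
            rw [hc0]
            intro hcontra
            have hval := congrArg Fin.val hcontra
            simp only [Fin.coe_castAdd] at hval
            exact hi' (Fin.ext hval)
          have e1 : o' (Fin.castAdd k i') = o (Fin.castAdd k i') := by
            rw [ho']; exact Function.update_of_ne hne _ _
          have e2 : ι'' i' = ι' i' := by
            rw [hι'']; exact Function.update_of_ne hi' _ _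
          rw [e1, e2, hinp' i' hi']
          exact hread.1 i'
      · intro j
        have hne : Fin.natAdd m j ≠ c0 := by
          rw [hc0]
          intro hcontra
          have := congrArg Fin.val hcontra
          simp only [Fin.coe_natAdd, Fin.coe_castAdd] at this
          have := i0.isLt
          omega
        have e1 : o' (Fin.natAdd m j) = o (Fin.natAdd m j) := by
          rw [ho']; exact Function.update_of_ne hne _ _
        rw [e1, hloc]
        exact hread.2 j
    have hdom : inResM o' o := by
      intro c
      by_cases hc : c = c0
      · subst hc
        rw [ho', Function.update_self]
        rcases chooseOpt_fst (C.inType i0) (t.inp i0) hbi with h | h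
        · left; rw [h, ho0]
        · right; exact h
      · left; rw [ho', Function.update_of_ne hc]
    have hw' : inResM (evalLogic C o') (Fin.append u.loc u.out) :=
      inResM_trans (evalLogic_dom hdom) hw
    refine ⟨⟨ι'', u.loc, u.out⟩, ⟨o', ι'', hread', rfl, hw'⟩, ?_⟩
    refine Relation.ReflTransGen.single ⟨?_, pst_succ hPt ⟨o, ι', hread, hinp, hw⟩,
      pst_succ hPt' ⟨o', ι'', hread', rfl, hw'⟩⟩
    right
    refine ⟨Sum.inl i0, fun ρ' hρ' => ?_, ?_⟩
    · match ρ' with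
      | Sum.inl i' =>
          have hi' : i' ≠ i0 := fun h => hρ' (by rw [h])
          show u.inp i' = ι'' i'
          rw [hι'', Function.update_of_ne hi', hinp]
      | Sum.inr (Sum.inl j) => rfl
      | Sum.inr (Sum.inr j) => rfl
    · show u.inp i0 = BM.metastable ∨ ι'' i0 = BM.metastable ∨ u.inp i0 = ι'' i0
      have e2 : ι'' i0 = p.2 := by rw [hι'']; exact Function.update_self _ _ _
      have e3 : u.inp i0 = t.inp i0 := by rw [hinp, hι0]
      rcases chooseOpt_snd (C.inType i0) (t.inp i0) hbi with h | h
      · right; right; rw [e2, e3, h]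
      · right; left; rw [e2, h]
  | Sum.inr (Sum.inl j0) =>
    have hMj : t'.loc j0 = BM.metastable := hM
    have hbj : t.loc j0 ≠ BM.metastable := hbM
    have hinpeq : t'.inp = t.inp := funext fun i =>
      (hoff (Sum.inl i) (by simp)).symm
    have hloc' : ∀ j', j' ≠ j0 → t'.loc j' = t.loc j' := fun j' hj' =>
      (hoff (Sum.inr (Sum.inl j')) (by simp [hj'])).symm
    obtain ⟨st0, hrj0⟩ := hread.2 j0
    have hpair := regRead_stable hbj hrj0
    have ho0 : o (Fin.natAdd m j0) = t.loc j0 := congrArg Prod.fst hpair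
    set p := chooseOpt (C.locType j0) (t.loc j0) with hp
    set c0 := Fin.natAdd m j0 with hc0
    set o' := Function.update o c0 p.1 with ho'
    have hread' : ReadRel C t' o' ι' := by
      constructor
      · intro i'
        have hne : Fin.castAdd k i' ≠ c0 := by
          rw [hc0]
          intro hcontra
          have := congrArg Fin.val hcontra
          simp only [Fin.coe_natAdd, Fin.coe_castAdd] at this
          have := i'.isLt
          omega
        have e1 : o' (Fin.castAdd k i') = o (Fin.castAdd k i') := by
          rw [ho']; exact Function.update_of_ne hne _ _
        rw [e1, hinpeq]
        exact hread.1 i'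
      · intro j'
        by_cases hj' : j' = j0
        · subst hj'
          have e1 : o' (Fin.natAdd m j') = p.1 := by
            rw [ho']; exact Function.update_self _ _ _
          refine ⟨p.2, ?_⟩
          rw [e1, hMj, Prod.mk.eta]
          exact chooseOpt_spec _ _
        · have hne : Fin.natAdd m j' ≠ c0 := by
            rw [hc0]
            intro hcontra
            exact hj' (Fin.ext (by
              have := congrArg Fin.val hcontra
              simp only [Fin.coe_natAdd] at this
              omega))
          have e1 : o' (Fin.natAdd m j') = o (Fin.natAdd m j') := by
            rw [ho']; exact Function.update_of_ne hne _ _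
          rw [e1, hloc' j' hj']
          exact hread.2 j'
    have hdom : inResM o' o := by
      intro c
      by_cases hc : c = c0
      · subst hc
        rw [ho', Function.update_self]
        rcases chooseOpt_fst (C.locType j0) (t.loc j0) hbj with h | h
        · left; rw [h, ho0]
        · right; exact h
      · left; rw [ho', Function.update_of_ne hc]
    have hw' : inResM (evalLogic C o') (Fin.append u.loc u.out) :=
      inResM_trans (evalLogic_dom hdom) hw
    exact ⟨u, ⟨o', ι', hread', hinp, hw'⟩, Relation.ReflTransGen.refl⟩
  | Sum.inr (Sum.inr j0) =>
    have hinpeq : t'.inp = t.inp := funext fun i =>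
      (hoff (Sum.inl i) (by simp)).symm
    have hloceq : t'.loc = t.loc := funext fun j =>
      (hoff (Sum.inr (Sum.inl j)) (by simp)).symm
    have hread' : ReadRel C t' o ι' := by
      constructor
      · intro i'
        rw [hinpeq]
        exact hread.1 i'
      · intro j'
        rw [hloceq]
        exact hread.2 j'
    exact ⟨u, ⟨o, ι', hread', hinp, hw⟩, Relation.ReflTransGen.refl⟩

lemma step_lift {C : Circuit m k n} {q : ℕ} {t t' u : CState m k n}
    (hst : StepQ C q t t') (hu : Succ C t u) :
    ∃ u', Succ C t' u' ∧ Chainx C (q + 1) u u' := by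
  obtain ⟨hadj, hPt, hPt'⟩ := hst
  rcases hadj with rfl | ⟨ρ0, hoff, hcase⟩
  · exact ⟨u, hu, Relation.ReflTransGen.refl⟩
  rcases hcase with h | h | h
  · obtain ⟨v0, hv0⟩ := succ_nonempty C t'
    obtain ⟨v, hv, hch⟩ := cross_resp ρ0 (fun ρ' hρ' => (hoff ρ' hρ').symm) h hPt' hPt hv0
    exact ⟨v0, hv0, (chain_same hPt hu hv).trans (chainx_symm hch)⟩
  · exact cross_resp ρ0 hoff h hPt hPt' hu
  · obtain rfl : t = t' := cext t t' (fun ρ => by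
      by_cases hρ : ρ = ρ0
      · subst hρ; exact h
      · exact hoff ρ hρ)
    exact ⟨u, hu, Relation.ReflTransGen.refl⟩

end AuxMC5
section AuxMC6

variable {m k n : ℕ}

lemma adjx_init (C : Circuit m k n) (w : Fin m → BM) (c : Fin m) (a : BM)
    (ha : w c = BM.metastable ∨ a = BM.metastable ∨ w c = a) :
    Adjx (initState C w) (initState C (Function.update w c a)) := by
  right
  refine ⟨Sum.inl c, fun ρ' hρ' => ?_, ?_⟩
  · match ρ' with
    | Sum.inl i =>
        have hne : i ≠ c := fun h => hρ' (by rw [h])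
        show w i = Function.update w c a i
        rw [Function.update_of_ne hne]
    | Sum.inr (Sum.inl j) => rfl
    | Sum.inr (Sum.inr j) => rfl
  · show w c = BM.metastable ∨ Function.update w c a c = BM.metastable ∨ w c = Function.update w c a c
    rw [Function.update_self]
    exact ha

lemma pst_init (C : Circuit m k n) (x : Fin m → BM) : Pst C 0 (initState C x) :=
  ⟨x, rfl⟩

lemma main_chain (C : Circuit m k n) (ι ι' : Fin m → BM) (r : ℕ) :
    ∃ t0 tp, t0 ∈ reach C r (initState C ι) ∧ tp ∈ reach C r (initState C ι') ∧
      Chainx C r t0 tp := by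
  induction r with
  | zero =>
    refine ⟨initState C ι, initState C ι', rfl, rfl, ?_⟩
    set jn : Fin m → BM := fun c => if ι c = ι' c then ι c else BM.metastable with hjn
    have leg : ∀ (v : Fin m → BM), (∀ c, v c = jn c ∨ jn c = BM.metastable) →
        Chainx C 0 (initState C v) (initState C jn) := by
      intro v hv
      refine hybChain v jn hv (fun a b => Chainx C 0 (initState C a) (initState C b))
        (fun _ => Relation.ReflTransGen.refl) (fun h1 h2 => h1.trans h2) ?_
      intro w c hmix
      refine Relation.ReflTransGen.single ⟨adjx_init C w c (jn c) ?_,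
        pst_init C w, pst_init C _⟩
      rcases hmix c with h | h
      · rcases hv c with h2 | h2
        · exact Or.inr (Or.inr (by rw [h, h2]))
        · exact Or.inr (Or.inl h2)
      · exact Or.inr (Or.inr h)
    have hι : ∀ c, ι c = jn c ∨ jn c = BM.metastable := by
      intro c
      by_cases h : ι c = ι' c
      · left; show ι c = if ι c = ι' c then ι c else BM.metastable; rw [if_pos h]
      · right; show (if ι c = ι' c then ι c else BM.metastable) = BM.metastable; rw [if_neg h]
    have hι' : ∀ c, ι' c = jn c ∨ jn c = BM.metastable := by
      intro c
      by_cases h : ι c = ι' c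
      · left; show ι' c = if ι c = ι' c then ι c else BM.metastable; rw [if_pos h, h]
      · right; show (if ι c = ι' c then ι c else BM.metastable) = BM.metastable; rw [if_neg h]
    exact (leg ι hι).trans (chainx_symm (leg ι' hι'))
  | succ q ih =>
    obtain ⟨t0, tp, h0, hp, hch⟩ := ih
    obtain ⟨u0, hu0⟩ := succ_nonempty C t0
    have key : ∀ {a b : CState m k n}, Chainx C q a b →
        ∀ u, Succ C a u → ∃ ub, Succ C b ub ∧ Chainx C (q + 1) u ub := by
      intro a b hab
      induction hab using Relation.ReflTransGen.head_induction_on with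
      | refl => exact fun u hu => ⟨u, hu, Relation.ReflTransGen.refl⟩
      | head hstep hrest ih2 =>
        intro u hu
        obtain ⟨u1, hu1, hch1⟩ := step_lift hstep hu
        obtain ⟨ub, hub, hchb⟩ := ih2 u1 hu1
        exact ⟨ub, hub, hch1.trans hchb⟩
    obtain ⟨up, hup, hch'⟩ := key hch u0 hu0
    exact ⟨u0, up, ⟨t0, h0, hu0⟩, ⟨tp, hp, hup⟩, hch'⟩

end AuxMC6
/-- if `C_r(ι) ∩ C_r(ι') = ∅` for some inputs `ι, ι'`, then `C` has an
`r`-round execution in which an output register becomes metastable. -/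
theorem disjoint_outputs_force_metastability {m k n : ℕ} (C : Circuit m k n)
    (r : ℕ) (hr : 0 < r) (ι ι' : Fin m → BM)
    (h : Cout C r ι ∩ Cout C r ι' = ∅) :
    ∃ ι'' : Fin m → BM, ∃ s ∈ reach C r (initState C ι''), ∃ j : Fin n,
      s.out j = BM.metastable := by
  by_contra hcon
  push_neg at hcon
  obtain ⟨t0, tp, h0, hp, hch⟩ := main_chain C ι ι' r
  have hout : ∀ {a b : CState m k n}, Chainx C r a b → a.out = b.out := by
    intro a b hab
    induction hab with
    | refl => rfl
    | tail hrest hstep ih =>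
      rw [ih]
      obtain ⟨hadj, hPb, hPc⟩ := hstep
      rcases hadj with rfl | ⟨ρ0, hoff, hcase⟩
      · rfl
      · funext jj
        by_cases hρ : Sum.inr (Sum.inr jj) = ρ0
        · subst hρ
          rcases hcase with h' | h' | h'
          · obtain ⟨ιb, hb⟩ := hPb
            exact absurd h' (hcon ιb _ hb jj)
          · obtain ⟨ιc, hc⟩ := hPc
            exact absurd h' (hcon ιc _ hc jj)
          · exact h'
        · exact hoff _ hρ
  have heq : t0.out = tp.out := hout hch
  have h1 : t0.out ∈ Cout C r ι := ⟨t0, h0, rfl⟩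
  have h2 : t0.out ∈ Cout C r ι' := ⟨tp, hp, heq⟩
  have hmem : t0.out ∈ Cout C r ι ∩ Cout C r ι' := ⟨h1, h2⟩
  rw [h] at hmem
  exact hmem
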